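/- arXiv:2005.14224 — 4 statements merged into one kernel-verified Lean document; each statement's English description precedes it below -/
import Mathlib

section
/- Constructive Implicit Function Theorem (existence and local uniqueness): Assume (H1)–(H4) together with 4K²ρL₁ < 1 and 2Kρ < ℓ_x. Then there exists a pair of constants (δ_α, δ_x) with 0 ≤ δ_α ≤ ℓ_α and 0 < δ_x ≤ ℓ_x satisfying 2KL₁δ_x + 2KL₂δ_α ≤ 1 and 2Kρ + 2KL₃δ_α + 2KL₄δ_α² ≤ δ_x; and for every pair (δ_α, δ_x) satisfying these four conditions the following holds: for every α ∈ P with ‖α − α*‖_P ≤ δ_α there exists a uniquely determined element x(α) ∈ X with ‖x(α) − x*‖_X ≤ δ_x such that G(α, x(α)) = 0. In particular, all solutions of G(α,x) = 0 with ‖α − α*‖_P ≤ δ_α and ‖x − x*‖_X ≤ δ_x lie on the graph of α ↦ x(α). -/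
set_option maxHeartbeats 1000000


/-- Constructive Implicit Function Theorem (existence and local uniqueness). -/
theorem constructive_implicit_function_theorem_existence
    {P X Y : Type*}
    [NormedAddCommGroup P] [NormedSpace ℝ P] [CompleteSpace P]
    [NormedAddCommGroup X] [NormedSpace ℝ X] [CompleteSpace X]
    [NormedAddCommGroup Y] [NormedSpace ℝ Y] [CompleteSpace Y]
    (G : P × X → Y) (DG : P × X → (P × X) →L[ℝ] Y)
    (hG : ∀ p : P × X, HasFDerivAt G (DG p) p)
    (αs : P) (xs : X)
    (ρ K L₁ L₂ L₃ L₄ ℓx ℓα : ℝ)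
    (hρ : 0 < ρ) (hK : 0 < K) (hL₁ : 0 < L₁) (hL₂ : 0 < L₂)
    (hL₃ : 0 < L₃) (hL₄ : 0 < L₄) (hℓx : 0 < ℓx) (hℓα : 0 ≤ ℓα)
    -- (H1) small residual
    (H1 : ‖G (αs, xs)‖ ≤ ρ)
    -- (H2) invertibility of the partial Fréchet derivative with inverse bound K
    (E : X ≃L[ℝ] Y)
    (hE : (E : X →L[ℝ] Y) = (DG (αs, xs)).comp (ContinuousLinearMap.inr ℝ P X))
    (H2 : ‖(E.symm : Y →L[ℝ] X)‖ ≤ K)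
    -- (H3) local Lipschitz continuity of the partial derivative in x
    (H3 : ∀ (α : P) (x : X), ‖x - xs‖ ≤ ℓx → ‖α - αs‖ ≤ ℓα →
      ‖(DG (α, x)).comp (ContinuousLinearMap.inr ℝ P X) -
        (DG (αs, xs)).comp (ContinuousLinearMap.inr ℝ P X)‖ ≤
        L₁ * ‖x - xs‖ + L₂ * ‖α - αs‖)
    -- (H4) bound on the partial derivative in the parameter
    (H4 : ∀ α : P, ‖α - αs‖ ≤ ℓα →
      ‖(DG (α, xs)).comp (ContinuousLinearMap.inl ℝ P X)‖ ≤ L₃ + L₄ * ‖α - αs‖)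
    (hc1 : 4 * K ^ 2 * ρ * L₁ < 1) (hc2 : 2 * K * ρ < ℓx) :
    (∃ δα δx : ℝ, 0 ≤ δα ∧ δα ≤ ℓα ∧ 0 < δx ∧ δx ≤ ℓx ∧
      2 * K * L₁ * δx + 2 * K * L₂ * δα ≤ 1 ∧
      2 * K * ρ + 2 * K * L₃ * δα + 2 * K * L₄ * δα ^ 2 ≤ δx) ∧
    (∀ δα δx : ℝ, 0 ≤ δα → δα ≤ ℓα → 0 < δx → δx ≤ ℓx →
      2 * K * L₁ * δx + 2 * K * L₂ * δα ≤ 1 →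
      2 * K * ρ + 2 * K * L₃ * δα + 2 * K * L₄ * δα ^ 2 ≤ δx →
      ∀ α : P, ‖α - αs‖ ≤ δα →
        ∃! x : X, ‖x - xs‖ ≤ δx ∧ G (α, x) = 0) := by

  constructor
  · refine ⟨0, 2 * K * ρ, le_refl 0, hℓα, by positivity, le_of_lt hc2, ?_, ?_⟩
    · nlinarith
    · nlinarith
  · intro δα δx hδα0 hδαℓ hδx0 hδxℓ hcontr hself α hα
    have hαℓ : ‖α - αs‖ ≤ ℓα := hα.trans hδαℓ
    set T : X → X := fun x => x - E.symm (G (α, x)) with hT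
    have hinr : (ContinuousLinearMap.inr ℝ P X)
        = ((0 : X →L[ℝ] P).prod (ContinuousLinearMap.id ℝ X)) := by
      ext x <;> simp
    -- derivative of T
    set D : X → X →L[ℝ] X := fun x =>
      ContinuousLinearMap.id ℝ X -
        (E.symm : Y →L[ℝ] X).comp ((DG (α, x)).comp (ContinuousLinearMap.inr ℝ P X)) with hD
    have hTderiv : ∀ x : X, HasFDerivAt T (D x) x := by
      intro x
      have hpair : HasFDerivAt (fun x : X => ((α, x) : P × X))
          (ContinuousLinearMap.inr ℝ P X) x := by
        rw [hinr]
        exact (hasFDerivAt_const α x).prodMk (hasFDerivAt_id x)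
      have hGx : HasFDerivAt (fun x : X => G (α, x))
          ((DG (α, x)).comp (ContinuousLinearMap.inr ℝ P X)) x :=
        (hG (α, x)).comp x hpair
      exact (hasFDerivAt_id x).sub
        (((E.symm : Y →L[ℝ] X).hasFDerivAt).comp x hGx)
    -- norm bound on D on the closed ball
    have hDbound : ∀ x ∈ Metric.closedBall xs δx, ‖D x‖ ≤ 1 / 2 := by
      intro x hx
      have hxδ : ‖x - xs‖ ≤ δx := by
        simpa [dist_eq_norm] using hx
      have hxℓ : ‖x - xs‖ ≤ ℓx := hxδ.trans hδxℓ
      have hDeq : D x = (E.symm : Y →L[ℝ] X).comp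
          ((E : X →L[ℝ] Y) - (DG (α, x)).comp (ContinuousLinearMap.inr ℝ P X)) := by
        ext v
        simp [hD, ContinuousLinearMap.sub_apply, ContinuousLinearMap.comp_apply, map_sub]
      have hnorm1 : ‖(E : X →L[ℝ] Y) - (DG (α, x)).comp (ContinuousLinearMap.inr ℝ P X)‖
          ≤ L₁ * ‖x - xs‖ + L₂ * ‖α - αs‖ := by
        rw [hE, norm_sub_rev]
        exact H3 α x hxℓ hαℓ
      calc ‖D x‖ ≤ ‖(E.symm : Y →L[ℝ] X)‖ *
            ‖(E : X →L[ℝ] Y) - (DG (α, x)).comp (ContinuousLinearMap.inr ℝ P X)‖ := by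
            rw [hDeq]; exact ContinuousLinearMap.opNorm_comp_le _ _
        _ ≤ K * (L₁ * ‖x - xs‖ + L₂ * ‖α - αs‖) := by
            apply mul_le_mul H2 hnorm1 (norm_nonneg _) (le_of_lt hK)
        _ ≤ K * (L₁ * δx + L₂ * δα) := by
            apply mul_le_mul_of_nonneg_left _ (le_of_lt hK)
            have := mul_le_mul_of_nonneg_left hxδ (le_of_lt hL₁)
            have := mul_le_mul_of_nonneg_left hα (le_of_lt hL₂)
            linarith
        _ ≤ 1 / 2 := by
            have hring : 2 * (K * (L₁ * δx + L₂ * δα)) = 2 * K * L₁ * δx + 2 * K * L₂ * δα := by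
              ring
            linarith
    -- contraction estimate
    have hcontract : ∀ x ∈ Metric.closedBall xs δx, ∀ y ∈ Metric.closedBall xs δx,
        ‖T y - T x‖ ≤ (1 / 2) * ‖y - x‖ := by
      intro x hx y hy
      exact Convex.norm_image_sub_le_of_norm_hasFDerivWithin_le
        (fun z hz => (hTderiv z).hasFDerivWithinAt) hDbound
        (convex_closedBall xs δx) hx hy
    -- bound on ‖G (α, xs)‖
    have hparam : ‖G (α, xs)‖ ≤ ρ + (L₃ + L₄ * δα) * δα := by
      have hDβ : ∀ β : P, HasFDerivAt (fun β : P => G (β, xs))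
          ((DG (β, xs)).comp (ContinuousLinearMap.inl ℝ P X)) β := by
        intro β
        have hinl : (ContinuousLinearMap.inl ℝ P X)
            = ((ContinuousLinearMap.id ℝ P).prod (0 : P →L[ℝ] X)) := by
          ext p <;> simp
        have hpair : HasFDerivAt (fun β : P => ((β, xs) : P × X))
            (ContinuousLinearMap.inl ℝ P X) β := by
          rw [hinl]
          exact (hasFDerivAt_id β).prodMk (hasFDerivAt_const xs β)
        exact (hG (β, xs)).comp β hpair
      have hbound : ∀ β ∈ Metric.closedBall αs δα,
          ‖(DG (β, xs)).comp (ContinuousLinearMap.inl ℝ P X)‖ ≤ L₃ + L₄ * δα := by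
        intro β hβ
        have hβδ : ‖β - αs‖ ≤ δα := by simpa [dist_eq_norm] using hβ
        have := H4 β (hβδ.trans hδαℓ)
        have := mul_le_mul_of_nonneg_left hβδ (le_of_lt hL₄)
        linarith
      have hmv : ‖G (α, xs) - G (αs, xs)‖ ≤ (L₃ + L₄ * δα) * ‖α - αs‖ :=
        Convex.norm_image_sub_le_of_norm_hasFDerivWithin_le
          (fun β hβ => (hDβ β).hasFDerivWithinAt) hbound
          (convex_closedBall αs δα)
          (by simpa [Metric.mem_closedBall, dist_self] using hδα0)
          (by simpa [Metric.mem_closedBall, dist_eq_norm] using hα)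
      have hL34 : 0 ≤ L₃ + L₄ * δα := by positivity
      have h2 : (L₃ + L₄ * δα) * ‖α - αs‖ ≤ (L₃ + L₄ * δα) * δα :=
        mul_le_mul_of_nonneg_left hα hL34
      calc ‖G (α, xs)‖ ≤ ‖G (αs, xs)‖ + ‖G (α, xs) - G (αs, xs)‖ := by
            have := norm_add_le (G (αs, xs)) (G (α, xs) - G (αs, xs))
            simpa using this
        _ ≤ ρ + (L₃ + L₄ * δα) * δα := by linarith
    -- T maps the closed ball into itself
    have hxs_mem : xs ∈ Metric.closedBall xs δx := by
      simp [Metric.mem_closedBall, le_of_lt hδx0]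
    have hmaps : ∀ x ∈ Metric.closedBall xs δx, T x ∈ Metric.closedBall xs δx := by
      intro x hx
      have hxδ : ‖x - xs‖ ≤ δx := by simpa [dist_eq_norm] using hx
      have h1 : ‖T x - T xs‖ ≤ (1 / 2) * ‖x - xs‖ := hcontract xs hxs_mem x hx
      have h2 : ‖T xs - xs‖ ≤ K * (ρ + (L₃ + L₄ * δα) * δα) := by
        have : T xs - xs = -(E.symm (G (α, xs))) := by simp [hT]
        rw [this, norm_neg]
        calc ‖(E.symm : Y →L[ℝ] X) (G (α, xs))‖
            ≤ ‖(E.symm : Y →L[ℝ] X)‖ * ‖G (α, xs)‖ :=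
              (E.symm : Y →L[ℝ] X).le_opNorm _
          _ ≤ K * (ρ + (L₃ + L₄ * δα) * δα) :=
              mul_le_mul H2 hparam (norm_nonneg _) (le_of_lt hK)
      have h3 : ‖T x - xs‖ ≤ (1 / 2) * ‖x - xs‖ + K * (ρ + (L₃ + L₄ * δα) * δα) := by
        calc ‖T x - xs‖ ≤ ‖T x - T xs‖ + ‖T xs - xs‖ := by
              have := norm_add_le (T x - T xs) (T xs - xs)
              simpa using this
          _ ≤ (1 / 2) * ‖x - xs‖ + K * (ρ + (L₃ + L₄ * δα) * δα) := by linarith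
      have : ‖T x - xs‖ ≤ δx := by nlinarith
      simpa [Metric.mem_closedBall, dist_eq_norm] using this
    -- fixed point via Banach
    haveI : Nonempty (Metric.closedBall xs δx) := ⟨⟨xs, hxs_mem⟩⟩
    haveI : CompleteSpace (Metric.closedBall xs δx) :=
      IsClosed.completeSpace_coe (hs := Metric.isClosed_closedBall)
    set F : Metric.closedBall xs δx → Metric.closedBall xs δx :=
      fun x => ⟨T x, hmaps x x.2⟩ with hF
    have hFcontr : ContractingWith (1 / 2 : NNReal) F := by
      constructor
      · exact one_half_lt_one
      · apply LipschitzWith.of_dist_le_mul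
        intro x y
        have := hcontract y y.2 x x.2
        simpa [hF, Subtype.dist_eq, dist_eq_norm] using this
    set x₀ := ContractingWith.fixedPoint F hFcontr with hx₀
    have hfix : F x₀ = x₀ := ContractingWith.fixedPoint_isFixedPt hFcontr
    have hfix' : T (x₀ : X) = (x₀ : X) := by
      have := congrArg Subtype.val hfix
      simpa [hF] using this
    have hGzero : G (α, (x₀ : X)) = 0 := by
      have h0 : E.symm (G (α, (x₀ : X))) = 0 := by
        have := hfix'
        simp only [hT] at this
        have := sub_eq_self.mp this
        exact this
      have := congrArg E h0
      simpa using this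
    have hx₀mem : ‖(x₀ : X) - xs‖ ≤ δx := by
      have h := x₀.2
      rw [Metric.mem_closedBall, dist_eq_norm] at h
      exact h
    refine ⟨(x₀ : X), ⟨hx₀mem, hGzero⟩, ?_⟩
    intro y ⟨hy1, hy2⟩
    have hy_mem : y ∈ Metric.closedBall xs δx := by
      simpa [Metric.mem_closedBall, dist_eq_norm] using hy1
    have hTy : T y = y := by
      simp [hT, hy2]
    have h1 := hcontract (x₀ : X) x₀.2 y hy_mem
    rw [hTy, hfix'] at h1
    have h2 : ‖y - (x₀ : X)‖ ≤ 0 := by linarith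
    have h3 : ‖y - (x₀ : X)‖ = 0 := le_antisymm h2 (norm_nonneg _)
    exact sub_eq_zero.mp (norm_eq_zero.mp h3)
end

section
/- Constructive Implicit Function Theorem (invertibility of the linearization on the validation box): Assume (H1)–(H4), and let (δ_α, δ_x) be any pair with 0 ≤ δ_α ≤ ℓ_α and 0 < δ_x ≤ ℓ_x satisfying 2KL₁δ_x + 2KL₂δ_α ≤ 1 and 2Kρ + 2KL₃δ_α + 2KL₄δ_α² ≤ δ_x. Then for all pairs (α, x) ∈ P × X with ‖α − α*‖_P ≤ δ_α and ‖x − x*‖_X ≤ δ_x, the Fréchet derivative D_xG(α, x) ∈ L(X,Y) is a bounded invertible linear operator whose inverse belongs to L(Y,X). -/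
/-- Constructive Implicit Function Theorem: invertibility of the linearization
on the validation box. -/
theorem constructive_implicit_function_theorem_invertibility
    {P X Y : Type*}
    [NormedAddCommGroup P] [NormedSpace ℝ P] [CompleteSpace P]
    [NormedAddCommGroup X] [NormedSpace ℝ X] [CompleteSpace X]
    [NormedAddCommGroup Y] [NormedSpace ℝ Y] [CompleteSpace Y]
    (G : P × X → Y) (DG : P × X → (P × X) →L[ℝ] Y)
    (hG : ∀ p : P × X, HasFDerivAt G (DG p) p)
    (αs : P) (xs : X)
    (ρ K L₁ L₂ L₃ L₄ ℓx ℓα : ℝ)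
    (hρ : 0 < ρ) (hK : 0 < K) (hL₁ : 0 < L₁) (hL₂ : 0 < L₂)
    (hL₃ : 0 < L₃) (hL₄ : 0 < L₄) (hℓx : 0 < ℓx) (hℓα : 0 ≤ ℓα)
    -- (H1) small residual
    (H1 : ‖G (αs, xs)‖ ≤ ρ)
    -- (H2) invertibility of the partial Fréchet derivative with inverse bound K
    (E : X ≃L[ℝ] Y)
    (hE : (E : X →L[ℝ] Y) = (DG (αs, xs)).comp (ContinuousLinearMap.inr ℝ P X))
    (H2 : ‖(E.symm : Y →L[ℝ] X)‖ ≤ K)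
    -- (H3) local Lipschitz continuity of the partial derivative in x
    (H3 : ∀ (α : P) (x : X), ‖x - xs‖ ≤ ℓx → ‖α - αs‖ ≤ ℓα →
      ‖(DG (α, x)).comp (ContinuousLinearMap.inr ℝ P X) -
        (DG (αs, xs)).comp (ContinuousLinearMap.inr ℝ P X)‖ ≤
        L₁ * ‖x - xs‖ + L₂ * ‖α - αs‖)
    -- (H4) bound on the partial derivative in the parameter
    (H4 : ∀ α : P, ‖α - αs‖ ≤ ℓα →
      ‖(DG (α, xs)).comp (ContinuousLinearMap.inl ℝ P X)‖ ≤ L₃ + L₄ * ‖α - αs‖)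
    -- the validation box parameters
    (δα δx : ℝ) (hδα0 : 0 ≤ δα) (hδα : δα ≤ ℓα) (hδx0 : 0 < δx) (hδx : δx ≤ ℓx)
    (hcond1 : 2 * K * L₁ * δx + 2 * K * L₂ * δα ≤ 1)
    (hcond2 : 2 * K * ρ + 2 * K * L₃ * δα + 2 * K * L₄ * δα ^ 2 ≤ δx) :
    ∀ (α : P) (x : X), ‖α - αs‖ ≤ δα → ‖x - xs‖ ≤ δx →
      ∃ E' : X ≃L[ℝ] Y,
        (E' : X →L[ℝ] Y) = (DG (α, x)).comp (ContinuousLinearMap.inr ℝ P X) := by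
  intro α x hα hx
  set A : X →L[ℝ] Y := (DG (α, x)).comp (ContinuousLinearMap.inr ℝ P X) with hA
  have hdiff : ‖A - (E : X →L[ℝ] Y)‖ ≤ L₁ * ‖x - xs‖ + L₂ * ‖α - αs‖ := by
    rw [hE]; exact H3 α x (hx.trans hδx) (hα.trans hδα)
  set t : X →L[ℝ] X := 1 - (E.symm : Y →L[ℝ] X).comp A with ht
  have htnorm : ‖t‖ < 1 := by
    have h1 : t = (E.symm : Y →L[ℝ] X).comp ((E : X →L[ℝ] Y) - A) := by
      ext z
      simp [t, ContinuousLinearMap.sub_apply]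
    have h2 : ‖t‖ ≤ K * (L₁ * ‖x - xs‖ + L₂ * ‖α - αs‖) := by
      rw [h1]
      calc ‖(E.symm : Y →L[ℝ] X).comp ((E : X →L[ℝ] Y) - A)‖
          ≤ ‖(E.symm : Y →L[ℝ] X)‖ * ‖(E : X →L[ℝ] Y) - A‖ :=
            ContinuousLinearMap.opNorm_comp_le _ _
        _ ≤ K * (L₁ * ‖x - xs‖ + L₂ * ‖α - αs‖) := by
            rw [← norm_neg ((E : X →L[ℝ] Y) - A), neg_sub]
            exact mul_le_mul H2 hdiff (norm_nonneg _) (le_of_lt hK)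
    have h3 : K * (L₁ * ‖x - xs‖ + L₂ * ‖α - αs‖) ≤ K * (L₁ * δx + L₂ * δα) := by
      apply mul_le_mul_of_nonneg_left _ hK.le
      have := hL₁.le; have := hL₂.le
      gcongr
    nlinarith [h2, h3]
  set w : (X →L[ℝ] X)ˣ := Units.oneSub t htnorm with hwdef
  have hw : (w : X →L[ℝ] X) = (E.symm : Y →L[ℝ] X).comp A := by
    rw [hwdef, Units.val_oneSub, ht, sub_sub_cancel]
  refine ⟨(ContinuousLinearEquiv.unitsEquiv ℝ X w).trans E, ?_⟩
  ext z
  have h5 : (w : X →L[ℝ] X) z = E.symm (A z) := by rw [hw]; rfl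
  show E ((ContinuousLinearEquiv.unitsEquiv ℝ X w) z) = A z
  rw [ContinuousLinearEquiv.unitsEquiv_apply, h5, E.apply_symm_apply]
end

section
/- Constructive Implicit Function Theorem (smoothness of the solution branch): Assume (H1)–(H4), and let (δ_α, δ_x) be any pair with 0 ≤ δ_α ≤ ℓ_α and 0 < δ_x ≤ ℓ_x satisfying 2KL₁δ_x + 2KL₂δ_α ≤ 1 and 2Kρ + 2KL₃δ_α + 2KL₄δ_α² ≤ δ_x, and let x(α) denote, for each α with ‖α − α*‖_P ≤ δ_α, the unique element of X with ‖x(α) − x*‖_X ≤ δ_x and G(α, x(α)) = 0. If the mapping G : P × X → Y is k-times continuously Fréchet differentiable, then the solution function α ↦ x(α) is k-times continuously Fréchet differentiable on the ball {α : ‖α − α*‖_P ≤ δ_α}. -/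
set_option maxHeartbeats 1000000


/-- Constructive Implicit Function Theorem: smoothness of the solution branch. -/
theorem constructive_implicit_function_theorem_smoothness
    {P X Y : Type*}
    [NormedAddCommGroup P] [NormedSpace ℝ P] [CompleteSpace P]
    [NormedAddCommGroup X] [NormedSpace ℝ X] [CompleteSpace X]
    [NormedAddCommGroup Y] [NormedSpace ℝ Y] [CompleteSpace Y]
    (G : P × X → Y) (DG : P × X → (P × X) →L[ℝ] Y)
    (hG : ∀ p : P × X, HasFDerivAt G (DG p) p)
    (αs : P) (xs : X)
    (ρ K L₁ L₂ L₃ L₄ ℓx ℓα : ℝ)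
    (hρ : 0 < ρ) (hK : 0 < K) (hL₁ : 0 < L₁) (hL₂ : 0 < L₂)
    (hL₃ : 0 < L₃) (hL₄ : 0 < L₄) (hℓx : 0 < ℓx) (hℓα : 0 ≤ ℓα)
    -- (H1) small residual
    (H1 : ‖G (αs, xs)‖ ≤ ρ)
    -- (H2) invertibility of the partial Fréchet derivative with inverse bound K
    (E : X ≃L[ℝ] Y)
    (hE : (E : X →L[ℝ] Y) = (DG (αs, xs)).comp (ContinuousLinearMap.inr ℝ P X))
    (H2 : ‖(E.symm : Y →L[ℝ] X)‖ ≤ K)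
    -- (H3) local Lipschitz continuity of the partial derivative in x
    (H3 : ∀ (α : P) (x : X), ‖x - xs‖ ≤ ℓx → ‖α - αs‖ ≤ ℓα →
      ‖(DG (α, x)).comp (ContinuousLinearMap.inr ℝ P X) -
        (DG (αs, xs)).comp (ContinuousLinearMap.inr ℝ P X)‖ ≤
        L₁ * ‖x - xs‖ + L₂ * ‖α - αs‖)
    -- (H4) bound on the partial derivative in the parameter
    (H4 : ∀ α : P, ‖α - αs‖ ≤ ℓα →
      ‖(DG (α, xs)).comp (ContinuousLinearMap.inl ℝ P X)‖ ≤ L₃ + L₄ * ‖α - αs‖)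
    -- the validation box parameters
    (δα δx : ℝ) (hδα0 : 0 ≤ δα) (hδα : δα ≤ ℓα) (hδx0 : 0 < δx) (hδx : δx ≤ ℓx)
    (hcond1 : 2 * K * L₁ * δx + 2 * K * L₂ * δα ≤ 1)
    (hcond2 : 2 * K * ρ + 2 * K * L₃ * δα + 2 * K * L₄ * δα ^ 2 ≤ δx)
    -- the solution function χ = (α ↦ x(α)), uniquely determined on the box
    (χ : P → X)
    (hχ : ∀ α : P, ‖α - αs‖ ≤ δα → ‖χ α - xs‖ ≤ δx ∧ G (α, χ α) = 0)
    (hχuniq : ∀ α : P, ‖α - αs‖ ≤ δα →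
      ∀ x : X, ‖x - xs‖ ≤ δx → G (α, x) = 0 → x = χ α)
    -- k-times continuous Fréchet differentiability of G
    (k : ℕ) (hGk : ContDiff ℝ k G) :
    ContDiffOn ℝ k χ {α : P | ‖α - αs‖ ≤ δα} := by
  classical
  set S : Set P := {α : P | ‖α - αs‖ ≤ δα} with hSdef
  have hGcont : Continuous G := continuous_iff_continuousAt.mpr fun p => (hG p).continuousAt
  set C : ℝ := L₁ * δx + L₂ * δα with hCdef
  have hC0 : 0 ≤ C := by positivity
  have hKC : K * C ≤ 1 / 2 := by rw [hCdef]; nlinarith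
  clear_value C
  -- derivative of x ↦ G (β, x)
  have hGx : ∀ (β : P) (x : X), HasFDerivAt (fun x : X => G (β, x))
      ((DG (β, x)).comp (ContinuousLinearMap.inr ℝ P X)) x := fun β x =>
    (hG (β, x)).comp x (hasFDerivAt_prodMk_right β x)
  -- bound on the deviation of the partial derivative from E
  have hdev : ∀ (β : P) (x : X), ‖β - αs‖ ≤ δα → ‖x - xs‖ ≤ δx →
      ‖(DG (β, x)).comp (ContinuousLinearMap.inr ℝ P X) - (E : X →L[ℝ] Y)‖ ≤ C := by
    intro β x hβ hx
    rw [hE]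
    refine (H3 β x (hx.trans hδx) (hβ.trans hδα)).trans ?_
    rw [hCdef]
    have := mul_le_mul_of_nonneg_left hx hL₁.le
    have := mul_le_mul_of_nonneg_left hβ hL₂.le
    linarith
  -- key quantitative estimate
  have key : ∀ α ∈ S, ∀ β ∈ S, ‖χ β - χ α‖ ≤ 2 * K * ‖G (β, χ α)‖ := by
    intro α hα β hβ
    have hα' : ‖α - αs‖ ≤ δα := hα
    have hβ' : ‖β - αs‖ ≤ δα := hβ
    obtain ⟨hxα, -⟩ := hχ α hα'
    obtain ⟨hxβ, hzβ⟩ := hχ β hβ'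
    -- mean value on the closed ball
    have hconv : Convex ℝ (Metric.closedBall xs δx) := convex_closedBall xs δx
    have hmemα : χ α ∈ Metric.closedBall xs δx := by
      rwa [Metric.mem_closedBall, dist_eq_norm]
    have hmemβ : χ β ∈ Metric.closedBall xs δx := by
      rwa [Metric.mem_closedBall, dist_eq_norm]
    have hmv : ‖(G (β, χ β) - E (χ β)) - (G (β, χ α) - E (χ α))‖ ≤ C * ‖χ β - χ α‖ := by
      refine hconv.norm_image_sub_le_of_norm_hasFDerivWithin_le
        (f := fun x : X => G (β, x) - E x)
        (f' := fun x : X => (DG (β, x)).comp (ContinuousLinearMap.inr ℝ P X) - (E : X →L[ℝ] Y))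
        (fun x hx => (((hGx β x).sub ((E : X →L[ℝ] Y).hasFDerivAt)).hasFDerivWithinAt))
        (fun x hx => hdev β x hβ' (by rwa [Metric.mem_closedBall, dist_eq_norm] at hx))
        hmemα hmemβ
    have hEu : ‖E (χ β - χ α)‖ ≤ C * ‖χ β - χ α‖ + ‖G (β, χ α)‖ := by
      calc ‖E (χ β - χ α)‖
          = ‖-(((G (β, χ β) - E (χ β)) - (G (β, χ α) - E (χ α)))) + (G (β, χ β) - G (β, χ α))‖ := by
            congr 1
            rw [map_sub]
            abel
        _ ≤ ‖-(((G (β, χ β) - E (χ β)) - (G (β, χ α) - E (χ α))))‖ + ‖G (β, χ β) - G (β, χ α)‖ :=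
            norm_add_le _ _
        _ ≤ C * ‖χ β - χ α‖ + ‖G (β, χ α)‖ := by
            have h2 : ‖G (β, χ β) - G (β, χ α)‖ = ‖G (β, χ α)‖ := by
              rw [hzβ, zero_sub, norm_neg]
            rw [norm_neg, h2]
            exact add_le_add hmv le_rfl
    have hu : ‖χ β - χ α‖ ≤ K * ‖E (χ β - χ α)‖ := by
      calc ‖χ β - χ α‖ = ‖E.symm (E (χ β - χ α))‖ := by simp
        _ ≤ ‖(E.symm : Y →L[ℝ] X)‖ * ‖E (χ β - χ α)‖ := (E.symm : Y →L[ℝ] X).le_opNorm _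
        _ ≤ K * ‖E (χ β - χ α)‖ := by
            exact mul_le_mul_of_nonneg_right H2 (norm_nonneg _)
    have hnn : 0 ≤ ‖χ β - χ α‖ := norm_nonneg _
    have hnn' : 0 ≤ ‖G (β, χ α)‖ := norm_nonneg _
    have e2 : K * ‖E (χ β - χ α)‖ ≤ K * C * ‖χ β - χ α‖ + K * ‖G (β, χ α)‖ := by
      calc K * ‖E (χ β - χ α)‖ ≤ K * (C * ‖χ β - χ α‖ + ‖G (β, χ α)‖) :=
            mul_le_mul_of_nonneg_left hEu hK.le
        _ = K * C * ‖χ β - χ α‖ + K * ‖G (β, χ α)‖ := by ring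
    have e3 : K * C * ‖χ β - χ α‖ ≤ 1 / 2 * ‖χ β - χ α‖ :=
      mul_le_mul_of_nonneg_right hKC hnn
    linarith
  -- continuity of χ on S
  have hχcont : ContinuousOn χ S := by
    intro α₀ hα₀
    have hz₀ : G (α₀, χ α₀) = 0 := (hχ α₀ hα₀).2
    have hlim : Filter.Tendsto (fun β => 2 * K * ‖G (β, χ α₀)‖) (nhdsWithin α₀ S) (nhds 0) := by
      have h1 : Filter.Tendsto (fun β => G (β, χ α₀)) (nhdsWithin α₀ S) (nhds 0) := by
        have hc : Continuous (fun β : P => G (β, χ α₀)) :=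
          hGcont.comp (continuous_id.prodMk continuous_const)
        have h2 := hc.tendsto α₀
        rw [hz₀] at h2
        exact h2.mono_left nhdsWithin_le_nhds
      simpa using (h1.norm.const_mul (2 * K))
    have : Filter.Tendsto (fun β => ‖χ β - χ α₀‖) (nhdsWithin α₀ S) (nhds 0) := by
      refine squeeze_zero' (Filter.Eventually.of_forall fun _ => norm_nonneg _) ?_ hlim
      filter_upwards [self_mem_nhdsWithin] with β hβ
      exact key α₀ hα₀ β hβ
    exact (tendsto_iff_norm_sub_tendsto_zero (f := χ)).mpr this
  rcases Nat.eq_zero_or_pos k with rfl | hk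
  · simpa [contDiffOn_zero] using hχcont
  have hk1 : (1 : WithTop ℕ∞) ≤ (k : ℕ) := by exact_mod_cast hk
  intro α₀ hα₀
  obtain ⟨hx₀, hz₀⟩ := hχ α₀ hα₀
  set a : P × X := (α₀, χ α₀) with hadef
  -- invertibility of the partial derivative at a
  set A : X →L[ℝ] Y := (DG a).comp (ContinuousLinearMap.inr ℝ P X) with hAdef
  have hAE : ‖A - (E : X →L[ℝ] Y)‖ ≤ C := hdev α₀ (χ α₀) hα₀ hx₀
  set t : X →L[ℝ] X := (E.symm : Y →L[ℝ] X).comp (A - (E : X →L[ℝ] Y)) with htdef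
  have ht : ‖t‖ < 1 := by
    have h1 : ‖t‖ ≤ ‖(E.symm : Y →L[ℝ] X)‖ * ‖A - (E : X →L[ℝ] Y)‖ :=
      ContinuousLinearMap.opNorm_comp_le _ _
    have h2 : ‖(E.symm : Y →L[ℝ] X)‖ * ‖A - (E : X →L[ℝ] Y)‖ ≤ K * C :=
      mul_le_mul H2 hAE (norm_nonneg _) hK.le
    have : ‖t‖ ≤ 1 / 2 := h1.trans (h2.trans hKC)
    linarith
  have ht' : ‖-t‖ < 1 := by rwa [norm_neg]
  set u : (X →L[ℝ] X)ˣ := Units.oneSub (-t) ht' with hudef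
  set e₁ : X ≃L[ℝ] X := ContinuousLinearEquiv.ofUnit u with he₁def
  set equivA : X ≃L[ℝ] Y := e₁.trans E with heAdef
  have hAeq : (equivA : X →L[ℝ] Y) = A := by
    ext x
    have huval : (u : X →L[ℝ] X) = 1 + t := by
      rw [hudef, Units.val_oneSub, sub_neg_eq_add]
    have h4 : e₁ x = x + t x := by
      show (u : X →L[ℝ] X) x = x + t x
      rw [huval]
      simp
    have h5 : E (t x) = A x - E x := by
      rw [htdef]
      simp
    calc (equivA : X →L[ℝ] Y) x = E (e₁ x) := rfl
      _ = E x + E (t x) := by rw [h4, map_add]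
      _ = A x := by rw [h5]; abel
  set B : P →L[ℝ] Y := (DG a).comp (ContinuousLinearMap.inl ℝ P X) with hBdef
  have hsplit : ∀ (p : P) (x : X), DG a (p, x) = B p + A x := by
    intro p x
    have : (p, x) = ((p, 0) : P × X) + ((0, x) : P × X) := by simp
    rw [this, map_add]
    simp [hBdef, hAdef, ContinuousLinearMap.comp_apply]
  -- the continuous linear equivalence serving as derivative of F
  set Φ : (P × X) ≃L[ℝ] (P × Y) := ContinuousLinearEquiv.equivOfInverse
    ((ContinuousLinearMap.fst ℝ P X).prod (DG a))
    ((ContinuousLinearMap.fst ℝ P Y).prod ((equivA.symm : Y →L[ℝ] X).comp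
      ((ContinuousLinearMap.snd ℝ P Y) - B.comp (ContinuousLinearMap.fst ℝ P Y))))
    (by
      intro w
      apply Prod.ext
      · simp
      · have h1 : DG a w = B w.1 + A w.2 := by rw [← hsplit]
        simp only [ContinuousLinearMap.prod_apply, ContinuousLinearMap.coe_fst',
          ContinuousLinearMap.comp_apply, ContinuousLinearMap.sub_apply,
          ContinuousLinearMap.coe_snd', h1]
        rw [add_sub_cancel_left, ← hAeq]
        simp)
    (by
      intro z
      apply Prod.ext
      · simp
      · simp only [ContinuousLinearMap.prod_apply, ContinuousLinearMap.coe_fst',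
          ContinuousLinearMap.comp_apply, ContinuousLinearMap.sub_apply,
          ContinuousLinearMap.coe_snd']
        rw [hsplit, ← hAeq]
        simp) with hΦdef
  set F : P × X → P × Y := fun p => (p.1, G p) with hFdef
  have hFk : ContDiffAt ℝ (k : ℕ) F a := (contDiff_fst.prodMk hGk).contDiffAt
  have hF' : HasFDerivAt F (Φ : (P × X) →L[ℝ] (P × Y)) a := by
    have h := HasFDerivAt.prodMk (hasFDerivAt_fst (p := a)) (hG a)
    exact h
  -- local inverse, smooth
  have hstrict : HasStrictFDerivAt F (Φ : (P × X) →L[ℝ] (P × Y)) a :=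
    hFk.hasStrictFDerivAt' hF' (zero_lt_one.trans_le hk1).ne'
  set g : P × Y → P × X := hFk.localInverse hF' (zero_lt_one.trans_le hk1).ne' with hgdef
  have hgsmooth : ContDiffAt ℝ (k : ℕ) g (F a) := hFk.to_localInverse hF' (zero_lt_one.trans_le hk1).ne'
  have hFa : F a = (α₀, 0) := by rw [hFdef]; simp [hadef, (hχ α₀ hα₀).2]
  have hgleft : ∀ᶠ p in nhds a, g (F p) = p := hstrict.eventually_left_inverse
  set h : P → X := fun α => (g (α, 0)).2 with hhdef
  have hh : ContDiffAt ℝ (k : ℕ) h α₀ := by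
    have h1 : ContDiffAt ℝ (k : ℕ) (fun α : P => ((α, (0 : Y)) : P × Y)) α₀ :=
      (contDiff_id.prodMk contDiff_const).contDiffAt
    have h2 : ContDiffAt ℝ (k : ℕ) g (α₀, (0 : Y)) := hFa ▸ hgsmooth
    exact (contDiff_snd.contDiffAt).comp α₀ (h2.comp α₀ h1)
  have hev : χ =ᶠ[nhdsWithin α₀ S] h := by
    have htend : Filter.Tendsto (fun α => (α, χ α)) (nhdsWithin α₀ S) (nhds a) := by
      exact (continuousWithinAt_id.prodMk (hχcont α₀ hα₀)).mono_left le_rfl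
    filter_upwards [htend.eventually hgleft, self_mem_nhdsWithin] with α hgα hαS
    have hzα : G (α, χ α) = 0 := (hχ α hαS).2
    have : F (α, χ α) = (α, 0) := by rw [hFdef]; simp [hzα]
    rw [this] at hgα
    have := congrArg Prod.snd hgα
    exact this.symm
  have hpt : χ α₀ = h α₀ := by
    have := hgleft.self_of_nhds
    rw [hFa] at this
    have := congrArg Prod.snd this
    exact this.symm
  exact (hh.contDiffWithinAt).congr_of_eventuallyEq hev hpt
end

section
/- Sobolev embedding for the zero mass case (Cauchy–Schwarz form): For d ∈ {1,2,3}, let (α_k)_{k ∈ ℕ₀^d, |k|>0} be a real coefficient family with Σ_{|k|>0} κ_k² α_k² < ∞. Then Σ_{|k|>0} c_k² κ_k⁻² < ∞, for every x ∈ Ω the series u(x) = Σ_{|k|>0} α_k φ_k(x) converges absolutely, and sup_{x ∈ Ω} |u(x)| ≤ (Σ_{|k|>0} κ_k² α_k²)^{1/2} · (Σ_{|k|>0} c_k² κ_k⁻²)^{1/2}; that is, ‖u‖_∞ ≤ ‖u‖_{H̄²} · (Σ_{|k|>0} c_k² κ_k⁻²)^{1/2}. -/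
open MeasureTheory Real

noncomputable section

/-- The open unit cube `Ω = (0,1)^d` in `ℝ^d`. -/
def cubeO (d : ℕ) : Set (Fin d → ℝ) := Set.univ.pi fun _ => Set.Ioo (0 : ℝ) 1

/-- The normalization constant `c_k = c_{k_1} ⋯ c_{k_d}` with `c_0 = 1`, `c_ℓ = √2` for `ℓ ≥ 1`. -/
def ck (d : ℕ) (k : Fin d → ℕ) : ℝ := ∏ i, (if k i = 0 then 1 else Real.sqrt 2)

/-- The cosine basis function `φ_k(x) = c_k ∏ cos(k_i π x_i)`. -/
def phi (d : ℕ) (k : Fin d → ℕ) (x : Fin d → ℝ) : ℝ :=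
  ck d k * ∏ i, Real.cos ((k i : ℝ) * Real.pi * x i)

/-- The Laplacian eigenvalue `κ_k = π² (k_1² + ⋯ + k_d²)`. -/
def kap (d : ℕ) (k : Fin d → ℕ) : ℝ := Real.pi ^ 2 * ∑ i, (k i : ℝ) ^ 2

/-- The index set of nonzero multi-indices (`|k| > 0`). -/
abbrev Idx (d : ℕ) := {k : Fin d → ℕ // k ≠ 0}


lemma aux_summable_pi_rpow : ∀ d : ℕ,
    Summable fun k : Fin d → ℕ => ∏ i, ((k i : ℝ) + 1) ^ (-(4/3) : ℝ)
  | 0 => by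
      simp only [Finset.univ_eq_empty, Finset.prod_empty]
      exact summable_of_finite_support (Set.toFinite _)
  | (d+1) => by
      have h1 : Summable fun n : ℕ => ((n : ℝ) + 1) ^ (-(4/3) : ℝ) := by
        have h0 : Summable fun n : ℕ => (n : ℝ) ^ (-(4/3) : ℝ) :=
          Real.summable_nat_rpow.2 (by norm_num)
        have h2 := h0.comp_injective Nat.succ_injective
        refine h2.congr fun n => ?_
        simp [Function.comp, Nat.succ_eq_add_one]
      have h2 := aux_summable_pi_rpow d
      have h3 := h1.mul_of_nonneg h2
        (fun n => Real.rpow_nonneg (by positivity) _)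
        (fun k => Finset.prod_nonneg fun i _ => Real.rpow_nonneg (by positivity) _)
      rw [← (Fin.consEquiv fun _ : Fin (d+1) => ℕ).summable_iff]
      refine h3.congr fun p => ?_
      simp only [Fin.consEquiv, Equiv.coe_fn_mk, Function.comp]
      rw [Fin.prod_univ_succ]
      simp

lemma aux_sum_sq_ge_one {d : ℕ} {k : Fin d → ℕ} (hk : k ≠ 0) :
    (1 : ℝ) ≤ ∑ i, (k i : ℝ) ^ 2 := by
  obtain ⟨i, hi⟩ := Function.ne_iff.mp hk
  have h1 : (1 : ℝ) ≤ (k i : ℝ) ^ 2 := by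
    have : 1 ≤ k i := Nat.one_le_iff_ne_zero.2 hi
    have : (1 : ℝ) ≤ (k i : ℝ) := by exact_mod_cast this
    nlinarith
  calc (1 : ℝ) ≤ (k i : ℝ) ^ 2 := h1
    _ ≤ ∑ j, (k j : ℝ) ^ 2 :=
        Finset.single_le_sum (f := fun j => ((k j : ℝ)) ^ 2)
          (fun j _ => by positivity) (Finset.mem_univ i)

lemma aux_prod_rpow_le {d : ℕ} (hd : d ≤ 3) {k : Fin d → ℕ} (hk : k ≠ 0) :
    ∏ i, ((k i : ℝ) + 1) ^ ((4/3) : ℝ) ≤ 16 * (∑ i, (k i : ℝ) ^ 2) ^ 2 := by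
  set S : ℝ := ∑ i, (k i : ℝ) ^ 2 with hSdef
  have hS : (1 : ℝ) ≤ S := aux_sum_sq_ge_one hk
  have hS0 : (0 : ℝ) ≤ S := by linarith
  have hsq : (1 : ℝ) ≤ Real.sqrt S := by
    rw [show (1:ℝ) = Real.sqrt 1 by simp]
    exact Real.sqrt_le_sqrt hS
  have hfac : ∀ i, ((k i : ℝ) + 1) ≤ 2 * Real.sqrt S := by
    intro i
    have h1 : ((k i : ℝ)) ^ 2 ≤ S :=
      Finset.single_le_sum (f := fun j => ((k j : ℝ)) ^ 2)
        (fun j _ => by positivity) (Finset.mem_univ i)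
    have h2 : (k i : ℝ) ≤ Real.sqrt S := by
      rw [← Real.sqrt_sq (by positivity : (0:ℝ) ≤ (k i : ℝ))]
      exact Real.sqrt_le_sqrt h1
    linarith
  have hstep : ∏ i, ((k i : ℝ) + 1) ^ ((4/3) : ℝ)
      ≤ ∏ _i : Fin d, (2 * Real.sqrt S) ^ ((4/3) : ℝ) := by
    refine Finset.prod_le_prod (fun i _ => Real.rpow_nonneg (by positivity) _)
      (fun i _ => Real.rpow_le_rpow (by positivity) (hfac i) (by norm_num))
  have hbase1 : (1 : ℝ) ≤ 2 * Real.sqrt S := by linarith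
  have hconst : ∏ _i : Fin d, (2 * Real.sqrt S) ^ ((4/3) : ℝ)
      = (2 * Real.sqrt S) ^ ((4/3 : ℝ) * d) := by
    rw [Finset.prod_const, Finset.card_univ, Fintype.card_fin,
      ← Real.rpow_natCast ((2 * Real.sqrt S) ^ ((4/3) : ℝ)) d,
      ← Real.rpow_mul (by positivity)]
  have hexp : (2 * Real.sqrt S) ^ ((4/3 : ℝ) * d) ≤ (2 * Real.sqrt S) ^ (4 : ℝ) := by
    apply Real.rpow_le_rpow_of_exponent_le hbase1
    have : (d : ℝ) ≤ 3 := by exact_mod_cast hd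
    nlinarith
  have hfinal : (2 * Real.sqrt S) ^ (4 : ℝ) = 16 * S ^ 2 := by
    rw [show (4:ℝ) = ((4:ℕ):ℝ) by norm_num, Real.rpow_natCast]
    have : Real.sqrt S ^ 4 = S ^ 2 := by
      rw [show 4 = 2 * 2 by norm_num, pow_mul, Real.sq_sqrt hS0]
    nlinarith [Real.sqrt_nonneg S]
  calc ∏ i, ((k i : ℝ) + 1) ^ ((4/3) : ℝ)
      ≤ ∏ _i : Fin d, (2 * Real.sqrt S) ^ ((4/3) : ℝ) := hstep
    _ = (2 * Real.sqrt S) ^ ((4/3 : ℝ) * d) := hconst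
    _ ≤ (2 * Real.sqrt S) ^ (4 : ℝ) := hexp
    _ = 16 * S ^ 2 := hfinal

lemma aux_ck_sq_le {d : ℕ} (hd : d ≤ 3) (k : Fin d → ℕ) : ck d k ^ 2 ≤ 8 := by
  have h1 : ck d k ^ 2 = ∏ i, (if k i = 0 then 1 else Real.sqrt 2) ^ 2 := by
    rw [ck, ← Finset.prod_pow]
  have h2 : ∀ i : Fin d, (if k i = 0 then (1:ℝ) else Real.sqrt 2) ^ 2 ≤ 2 := by
    intro i
    split
    · norm_num
    · rw [Real.sq_sqrt (by norm_num : (0:ℝ) ≤ 2)]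
  calc ck d k ^ 2 = ∏ i, (if k i = 0 then (1:ℝ) else Real.sqrt 2) ^ 2 := h1
    _ ≤ ∏ _i : Fin d, (2:ℝ) :=
        Finset.prod_le_prod (fun i _ => by positivity) (fun i _ => h2 i)
    _ = 2 ^ d := by rw [Finset.prod_const, Finset.card_univ, Fintype.card_fin]
    _ ≤ 2 ^ 3 := by
        exact pow_le_pow_right₀ (by norm_num) hd
    _ = 8 := by norm_num

lemma aux_ck_nonneg {d : ℕ} (k : Fin d → ℕ) : 0 ≤ ck d k :=
  Finset.prod_nonneg fun i _ => by split <;> positivity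

lemma aux_kap_pos {d : ℕ} {k : Fin d → ℕ} (hk : k ≠ 0) : 0 < kap d k := by
  have := aux_sum_sq_ge_one hk
  have hpi := Real.pi_pos
  rw [kap]; nlinarith

lemma aux_abs_phi_le {d : ℕ} (k : Fin d → ℕ) (x : Fin d → ℝ) : |phi d k x| ≤ ck d k := by
  rw [phi, abs_mul, abs_of_nonneg (aux_ck_nonneg k)]
  have h1 : |∏ i, Real.cos ((k i : ℝ) * Real.pi * x i)| ≤ 1 := by
    rw [Finset.abs_prod]
    exact Finset.prod_le_one (fun i _ => abs_nonneg _) (fun i _ => Real.abs_cos_le_one _)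
  nlinarith [aux_ck_nonneg k, abs_nonneg (∏ i, Real.cos ((k i : ℝ) * Real.pi * x i))]

/-- The key comparison for the weight series. -/
lemma aux_weight_le {d : ℕ} (hd : d ≤ 3) {k : Fin d → ℕ} (hk : k ≠ 0) :
    ck d k ^ 2 / kap d k ^ 2
      ≤ (128 / Real.pi ^ 4) * ∏ i, ((k i : ℝ) + 1) ^ (-(4/3) : ℝ) := by
  set S : ℝ := ∑ i, (k i : ℝ) ^ 2 with hSdef
  have hS : (1 : ℝ) ≤ S := aux_sum_sq_ge_one hk
  set P : ℝ := ∏ i, ((k i : ℝ) + 1) ^ ((4/3) : ℝ) with hPdef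
  have hP0 : 0 < P := Finset.prod_pos fun i _ => Real.rpow_pos_of_pos (by positivity) _
  have hPle : P ≤ 16 * S ^ 2 := aux_prod_rpow_le hd hk
  have hprod : ∏ i, ((k i : ℝ) + 1) ^ (-(4/3) : ℝ) = P⁻¹ := by
    rw [hPdef, ← Finset.prod_inv_distrib]
    refine Finset.prod_congr rfl fun i _ => ?_
    rw [← Real.rpow_neg (by positivity)]
  have hkap : kap d k ^ 2 = Real.pi ^ 4 * S ^ 2 := by rw [kap]; ring
  have hpi := Real.pi_pos
  rw [hprod, hkap]
  have hck := aux_ck_sq_le hd k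
  rw [div_le_iff₀ (by positivity)]
  have hgoal : (128 / Real.pi ^ 4) * P⁻¹ * (Real.pi ^ 4 * S ^ 2) = 128 * S ^ 2 / P := by
    field_simp
  rw [hgoal, le_div_iff₀ hP0]
  nlinarith


/-- Sobolev embedding for the zero mass case, Cauchy–Schwarz form:
if `Σ_{|k|>0} κ_k² α_k² < ∞` then `Σ_{|k|>0} c_k² κ_k⁻² < ∞`, the series
`u(x) = Σ α_k φ_k(x)` converges absolutely at every point of `Ω`, and
`|u(x)| ≤ (Σ κ_k² α_k²)^{1/2} (Σ c_k² κ_k⁻²)^{1/2}`. -/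
theorem sobolev_embedding_zero_mass (d : ℕ) (hd : d = 1 ∨ d = 2 ∨ d = 3)
    (a : Idx d → ℝ) (ha : Summable fun k : Idx d => kap d k.1 ^ 2 * a k ^ 2) :
    (Summable fun k : Idx d => ck d k.1 ^ 2 / kap d k.1 ^ 2) ∧
    (∀ x ∈ cubeO d, Summable fun k : Idx d => |a k * phi d k.1 x|) ∧
    (∀ x ∈ cubeO d,
      |∑' k : Idx d, a k * phi d k.1 x| ≤
        Real.sqrt (∑' k : Idx d, kap d k.1 ^ 2 * a k ^ 2) *
          Real.sqrt (∑' k : Idx d, ck d k.1 ^ 2 / kap d k.1 ^ 2)) := by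
  have hd3 : d ≤ 3 := by rcases hd with h | h | h <;> omega
  -- Part 1
  have hsum1 : Summable fun k : Idx d => ck d k.1 ^ 2 / kap d k.1 ^ 2 := by
    have hmaj : Summable fun k : Fin d → ℕ =>
        (128 / Real.pi ^ 4) * ∏ i, ((k i : ℝ) + 1) ^ (-(4/3) : ℝ) :=
      (aux_summable_pi_rpow d).mul_left _
    have hsub := hmaj.subtype {k : Fin d → ℕ | k ≠ 0}
    refine Summable.of_nonneg_of_le (fun k => ?_) (fun k => ?_) hsub
    · have := aux_kap_pos k.2; positivity
    · exact aux_weight_le hd3 k.2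
  -- common estimates
  have hkp : ∀ k : Idx d, 0 < kap d k.1 := fun k => aux_kap_pos k.2
  have hphi : ∀ (k : Idx d) (x : Fin d → ℝ), phi d k.1 x ^ 2 ≤ ck d k.1 ^ 2 := by
    intro k x
    have h := aux_abs_phi_le k.1 x
    nlinarith [abs_nonneg (phi d k.1 x), sq_abs (phi d k.1 x)]
  have hsumh : ∀ x : Fin d → ℝ,
      Summable fun k : Idx d => phi d k.1 x ^ 2 / kap d k.1 ^ 2 := by
    intro x
    refine Summable.of_nonneg_of_le (fun k => by positivity) (fun k => ?_) hsum1
    exact div_le_div_of_nonneg_right (hphi k x) (by positivity) |>.trans_eq rfl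
  have habs : ∀ x : Fin d → ℝ, Summable fun k : Idx d => |a k * phi d k.1 x| := by
    intro x
    have hmaj : Summable fun k : Idx d =>
        (kap d k.1 ^ 2 * a k ^ 2 + phi d k.1 x ^ 2 / kap d k.1 ^ 2) / 2 :=
      ((ha.add (hsumh x)).div_const 2)
    refine Summable.of_nonneg_of_le (fun k => abs_nonneg _) (fun k => ?_) hmaj
    have hk := hkp k
    have key : |a k * phi d k.1 x| = |kap d k.1 * a k| * (|phi d k.1 x| / kap d k.1) := by
      rw [abs_mul, abs_mul, abs_of_pos hk]
      field_simp
    rw [key]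
    have h2 := two_mul_le_add_sq (|kap d k.1 * a k|) (|phi d k.1 x| / kap d k.1)
    have e1 : |kap d k.1 * a k| ^ 2 = kap d k.1 ^ 2 * a k ^ 2 := by
      rw [sq_abs]; ring
    have e2 : (|phi d k.1 x| / kap d k.1) ^ 2 = phi d k.1 x ^ 2 / kap d k.1 ^ 2 := by
      rw [div_pow, sq_abs]
    rw [e1, e2] at h2
    linarith
  refine ⟨hsum1, fun x _ => habs x, fun x _ => ?_⟩
  -- Part 3
  have hsummable : Summable fun k : Idx d => a k * phi d k.1 x := (habs x).of_abs
  have h1 : |∑' k : Idx d, a k * phi d k.1 x| ≤ ∑' k : Idx d, |a k * phi d k.1 x| := by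
    have := norm_tsum_le_tsum_norm (f := fun k : Idx d => a k * phi d k.1 x)
        (by simp only [Real.norm_eq_abs]; exact habs x)
    simpa only [Real.norm_eq_abs] using this
  refine h1.trans ?_
  set A := Real.sqrt (∑' k : Idx d, kap d k.1 ^ 2 * a k ^ 2)
  set B := Real.sqrt (∑' k : Idx d, ck d k.1 ^ 2 / kap d k.1 ^ 2)
  refine Summable.tsum_le_of_sum_le (habs x) fun s => ?_
  set f : Idx d → ℝ := fun k => |kap d k.1 * a k|
  set g : Idx d → ℝ := fun k => |phi d k.1 x| / kap d k.1
  have heq : ∀ k : Idx d, |a k * phi d k.1 x| = f k * g k := by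
    intro k
    have hk := hkp k
    simp only [f, g, abs_mul]
    rw [abs_of_pos hk]
    field_simp
  have hCS := Real.sum_mul_le_sqrt_mul_sqrt s f g
  have hfA : Real.sqrt (∑ k ∈ s, f k ^ 2) ≤ A := by
    apply Real.sqrt_le_sqrt
    calc ∑ k ∈ s, f k ^ 2 = ∑ k ∈ s, kap d k.1 ^ 2 * a k ^ 2 := by
          refine Finset.sum_congr rfl fun k _ => ?_
          simp only [f]; rw [sq_abs]; ring
      _ ≤ ∑' k : Idx d, kap d k.1 ^ 2 * a k ^ 2 :=
          Summable.sum_le_tsum s (fun k _ => by positivity) ha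
  have hgB : Real.sqrt (∑ k ∈ s, g k ^ 2) ≤ B := by
    apply Real.sqrt_le_sqrt
    calc ∑ k ∈ s, g k ^ 2 ≤ ∑ k ∈ s, ck d k.1 ^ 2 / kap d k.1 ^ 2 := by
          refine Finset.sum_le_sum fun k _ => ?_
          have hk := hkp k
          simp only [g]
          rw [div_pow, sq_abs]
          exact div_le_div_of_nonneg_right (hphi k x) (by positivity) |>.trans_eq rfl
      _ ≤ ∑' k : Idx d, ck d k.1 ^ 2 / kap d k.1 ^ 2 :=
          Summable.sum_le_tsum s (fun k _ => by have := hkp k; positivity) hsum1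
  calc ∑ k ∈ s, |a k * phi d k.1 x| = ∑ k ∈ s, f k * g k :=
        Finset.sum_congr rfl fun k _ => heq k
    _ ≤ Real.sqrt (∑ k ∈ s, f k ^ 2) * Real.sqrt (∑ k ∈ s, g k ^ 2) := hCS
    _ ≤ A * B := mul_le_mul hfA hgB (Real.sqrt_nonneg _) (by
        exact le_trans (Real.sqrt_nonneg _) hfA)

end
end
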